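/- arXiv:math/0701496 — 2 statements merged into one kernel-verified Lean document; each statement's English description precedes it below -/
import Mathlib

section
/- Let F be a continuous function on an open disc D ⊂ ℂ that is holomorphic on the complement of a smooth arc γ ⊂ D (i.e. F is holomorphic on each of the two open components of D \ γ and continuous across γ). Then F is holomorphic on all of D. -/
open Complex Metric Set intervalIntegral
open scoped Interval

noncomputable def Bint (F : ℂ → ℂ) (a b c d : ℝ) : ℂ :=
  (∫ x in a..b, F (x + c*I)) - (∫ x in a..b, F (x + d*I)) +
    I • (∫ y in c..d, F (b + y*I)) - I • (∫ y in c..d, F (a + y*I))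

lemma mem_rect {a b c d x y : ℝ} (hx : x ∈ [[a,b]]) (hy : y ∈ [[c,d]]) :
    (x + y*I : ℂ) ∈ [[a,b]] ×ℂ [[c,d]] := by
  rw [mem_reProdIm]; simp [hx, hy]

lemma contOn_h {F : ℂ → ℂ} {a b c d : ℝ} (h : ContinuousOn F ([[a,b]] ×ℂ [[c,d]])) {y : ℝ}
    (hy : y ∈ [[c,d]]) : ContinuousOn (fun x : ℝ => F (x + y*I)) [[a,b]] := by
  refine ContinuousOn.comp h ?_ fun x hx => mem_rect hx hy
  exact (Complex.continuous_ofReal.add continuous_const).continuousOn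

lemma contOn_v {F : ℂ → ℂ} {a b c d : ℝ} (h : ContinuousOn F ([[a,b]] ×ℂ [[c,d]])) {x : ℝ}
    (hx : x ∈ [[a,b]]) : ContinuousOn (fun y : ℝ => F (x + y*I)) [[c,d]] := by
  refine ContinuousOn.comp h ?_ fun y hy => mem_rect hx hy
  exact (continuous_const.add (Complex.continuous_ofReal.mul continuous_const)).continuousOn

lemma intInt_h {F : ℂ → ℂ} {a b c d : ℝ} (h : ContinuousOn F ([[a,b]] ×ℂ [[c,d]])) {y : ℝ}
    (hy : y ∈ [[c,d]]) : IntervalIntegrable (fun x : ℝ => F (x + y*I)) MeasureTheory.volume a b :=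
  (contOn_h h hy).intervalIntegrable

lemma intInt_v {F : ℂ → ℂ} {a b c d : ℝ} (h : ContinuousOn F ([[a,b]] ×ℂ [[c,d]])) {x : ℝ}
    (hx : x ∈ [[a,b]]) : IntervalIntegrable (fun y : ℝ => F (x + y*I)) MeasureTheory.volume c d :=
  (contOn_v h hx).intervalIntegrable

lemma rect_subset_rect {a b c d a' b' c' d' : ℝ} (h1 : [[a',b']] ⊆ [[a,b]])
    (h2 : [[c',d']] ⊆ [[c,d]]) : ([[a',b']] ×ℂ [[c',d']]) ⊆ [[a,b]] ×ℂ [[c,d]] := fun z hz => by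
  rw [mem_reProdIm] at hz ⊢; exact ⟨h1 hz.1, h2 hz.2⟩

/-- Cauchy–Goursat: `Bint` vanishes on rectangles avoiding the bad set. -/
lemma Bint_eq_zero_of_diff {F : ℂ → ℂ} {a b c d : ℝ}
    (hc : ContinuousOn F ([[a,b]] ×ℂ [[c,d]]))
    (hd : DifferentiableOn ℂ F (Ioo (min a b) (max a b) ×ℂ Ioo (min c d) (max c d))) :
    Bint F a b c d = 0 := by
  have := Complex.integral_boundary_rect_eq_zero_of_continuousOn_of_differentiableOn F
    (a + c*I) (b + d*I) (by simpa using hc) (by simpa using hd)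
  simpa [Bint] using this

lemma Bint_symm_x (F : ℂ → ℂ) (a b c d : ℝ) : Bint F b a c d = - Bint F a b c d := by
  simp only [Bint, intervalIntegral.integral_symm b a]; ring

lemma Bint_symm_y (F : ℂ → ℂ) (a b c d : ℝ) : Bint F a b d c = - Bint F a b c d := by
  simp only [Bint, intervalIntegral.integral_symm d c, smul_neg]; ring

/-- additivity under a vertical cut at `m ∈ [[a,b]]`. -/
lemma Bint_add_x {F : ℂ → ℂ} {a b c d m : ℝ} (hc : ContinuousOn F ([[a,b]] ×ℂ [[c,d]]))
    (hm : m ∈ [[a,b]]) : Bint F a b c d = Bint F a m c d + Bint F m b c d := by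
  have h1 : [[a,m]] ⊆ [[a,b]] := uIcc_subset_uIcc left_mem_uIcc hm
  have h2 : [[m,b]] ⊆ [[a,b]] := uIcc_subset_uIcc hm right_mem_uIcc
  have e1 := intervalIntegral.integral_add_adjacent_intervals
    ((intInt_h hc left_mem_uIcc).mono_set h1) ((intInt_h hc left_mem_uIcc).mono_set h2)
  have e2 := intervalIntegral.integral_add_adjacent_intervals
    ((intInt_h hc right_mem_uIcc).mono_set h1) ((intInt_h hc right_mem_uIcc).mono_set h2)
  simp only [Bint, ← e1, ← e2]; ring

/-- additivity under a horizontal cut at `m ∈ [[c,d]]`. -/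
lemma Bint_add_y {F : ℂ → ℂ} {a b c d m : ℝ} (hc : ContinuousOn F ([[a,b]] ×ℂ [[c,d]]))
    (hm : m ∈ [[c,d]]) : Bint F a b c d = Bint F a b c m + Bint F a b m d := by
  have h1 : [[c,m]] ⊆ [[c,d]] := uIcc_subset_uIcc left_mem_uIcc hm
  have h2 : [[m,d]] ⊆ [[c,d]] := uIcc_subset_uIcc hm right_mem_uIcc
  have e1 := intervalIntegral.integral_add_adjacent_intervals
    ((intInt_v hc left_mem_uIcc).mono_set h1) ((intInt_v hc left_mem_uIcc).mono_set h2)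
  have e2 := intervalIntegral.integral_add_adjacent_intervals
    ((intInt_v hc right_mem_uIcc).mono_set h1) ((intInt_v hc right_mem_uIcc).mono_set h2)
  simp only [Bint, ← e1, ← e2, smul_eq_mul]; ring

/-- size bound when `F` is close to a constant on the rectangle. -/
lemma Bint_norm_le {F : ℂ → ℂ} {a b c d : ℝ} {k : ℂ} {ε : ℝ}
    (hc : ContinuousOn F ([[a,b]] ×ℂ [[c,d]]))
    (hk : ∀ z ∈ [[a,b]] ×ℂ [[c,d]], ‖F z - k‖ ≤ ε) :
    ‖Bint F a b c d‖ ≤ 2*ε*(|b-a| + |d-c|) := by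
  have hsub : Bint F a b c d = Bint (fun z => F z - k) a b c d := by
    simp only [Bint, intervalIntegral.integral_sub (intInt_h hc left_mem_uIcc)
        intervalIntegrable_const,
      intervalIntegral.integral_sub (intInt_h hc right_mem_uIcc) intervalIntegrable_const,
      intervalIntegral.integral_sub (intInt_v hc left_mem_uIcc) intervalIntegrable_const,
      intervalIntegral.integral_sub (intInt_v hc right_mem_uIcc) intervalIntegrable_const,
      intervalIntegral.integral_const, smul_eq_mul]
    ring
  rw [hsub]
  have B1 : ∀ y ∈ [[c,d]], ‖∫ x in a..b, (F (x + y*I) - k)‖ ≤ ε * |b - a| := fun y hy =>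
    intervalIntegral.norm_integral_le_of_norm_le_const fun x hx =>
      hk _ (mem_rect (uIoc_subset_uIcc hx) hy)
  have B2 : ∀ x ∈ [[a,b]], ‖∫ y in c..d, (F (x + y*I) - k)‖ ≤ ε * |d - c| := fun x hx =>
    intervalIntegral.norm_integral_le_of_norm_le_const fun y hy =>
      hk _ (mem_rect hx (uIoc_subset_uIcc hy))
  rw [Bint]
  set A := ∫ x in a..b, (F (x + c*I) - k)
  set B := ∫ x in a..b, (F (x + d*I) - k)
  set C := ∫ y in c..d, (F (b + y*I) - k)
  set D := ∫ y in c..d, (F (a + y*I) - k)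
  have hIC : ‖I • C‖ = ‖C‖ := by rw [norm_smul, Complex.norm_I, one_mul]
  have hID : ‖I • D‖ = ‖D‖ := by rw [norm_smul, Complex.norm_I, one_mul]
  have h1 := B1 c left_mem_uIcc
  have h2 := B1 d right_mem_uIcc
  have h3 := B2 b right_mem_uIcc
  have h4 := B2 a left_mem_uIcc
  calc ‖A - B + I • C - I • D‖ ≤ ‖A - B + I • C‖ + ‖I • D‖ := norm_sub_le _ _
    _ ≤ (‖A - B‖ + ‖I • C‖) + ‖I • D‖ := by gcongr; exact norm_add_le _ _
    _ ≤ ((‖A‖ + ‖B‖) + ‖I • C‖) + ‖I • D‖ := by gcongr; exact norm_sub_le _ _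
    _ ≤ 2*ε*(|b-a| + |d-c|) := by rw [hIC, hID]; linarith

lemma abs_sub_le_of_uIcc {x₁ x₂ m t : ℝ} (ht : t ∈ [[x₁,x₂]]) :
    |t - m| ≤ max |x₁ - m| |x₂ - m| := by
  rw [Set.uIcc, Set.mem_Icc] at ht
  rw [abs_sub_le_iff]
  constructor
  · calc t - m ≤ max x₁ x₂ - m := by linarith [ht.2]
      _ ≤ max (x₁ - m) (x₂ - m) := by
          rcases max_cases x₁ x₂ with ⟨h,_⟩|⟨h,_⟩ <;> simp [h]
      _ ≤ max |x₁ - m| |x₂ - m| := max_le_max (le_abs_self _) (le_abs_self _)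
  · calc m - t ≤ m - min x₁ x₂ := by linarith [ht.1]
      _ ≤ max (m - x₁) (m - x₂) := by
          rcases min_cases x₁ x₂ with ⟨h,_⟩|⟨h,_⟩ <;> simp [h]
      _ ≤ max |x₁ - m| |x₂ - m| := max_le_max
          (by rw [abs_sub_comm]; exact le_abs_self _)
          (by rw [abs_sub_comm]; exact le_abs_self _)

lemma rect_subset_ball {x₁ x₂ y₁ y₂ r : ℝ} {p : ℂ}
    (h : ∀ s ∈ ({x₁, x₂} : Set ℝ), ∀ t ∈ ({y₁, y₂} : Set ℝ), dist (↑s + ↑t*I : ℂ) p < r) :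
    ([[x₁,x₂]] ×ℂ [[y₁,y₂]]) ⊆ ball p r := by
  intro z hz
  rw [mem_reProdIm] at hz
  have hre : |z.re - p.re| ≤ max |x₁ - p.re| |x₂ - p.re| := abs_sub_le_of_uIcc hz.1
  have him : |z.im - p.im| ≤ max |y₁ - p.im| |y₂ - p.im| := abs_sub_le_of_uIcc hz.2
  obtain ⟨s, hs, hsA⟩ : ∃ s ∈ ({x₁, x₂} : Set ℝ), max |x₁ - p.re| |x₂ - p.re| = |s - p.re| := by
    rcases max_cases |x₁ - p.re| |x₂ - p.re| with ⟨h1, _⟩ | ⟨h1, _⟩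
    exacts [⟨x₁, by simp, h1⟩, ⟨x₂, by simp, h1⟩]
  obtain ⟨t, ht, htA⟩ : ∃ t ∈ ({y₁, y₂} : Set ℝ), max |y₁ - p.im| |y₂ - p.im| = |t - p.im| := by
    rcases max_cases |y₁ - p.im| |y₂ - p.im| with ⟨h1, _⟩ | ⟨h1, _⟩
    exacts [⟨y₁, by simp, h1⟩, ⟨y₂, by simp, h1⟩]
  have key : dist z p ≤ dist (↑s + ↑t*I : ℂ) p := by
    rw [Complex.dist_eq, Complex.dist_eq, Complex.norm_def, Complex.norm_def,
      Complex.normSq_apply, Complex.normSq_apply]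
    apply Real.sqrt_le_sqrt
    have e1 : ((↑s + ↑t*I : ℂ) - p).re = s - p.re := by simp
    have e2 : ((↑s + ↑t*I : ℂ) - p).im = t - p.im := by simp
    rw [e1, e2]
    have b1 : (z.re - p.re)*(z.re - p.re) ≤ (s - p.re)*(s - p.re) := by
      rw [← abs_mul_abs_self (z.re - p.re), ← abs_mul_abs_self (s - p.re)]
      have := hre.trans_eq hsA
      exact mul_le_mul this this (abs_nonneg _) (abs_nonneg _)
    have b2 : (z.im - p.im)*(z.im - p.im) ≤ (t - p.im)*(t - p.im) := by
      rw [← abs_mul_abs_self (z.im - p.im), ← abs_mul_abs_self (t - p.im)]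
      have := him.trans_eq htA
      exact mul_le_mul this this (abs_nonneg _) (abs_nonneg _)
    simp only [Complex.sub_re, Complex.sub_im]
    linarith
  exact mem_ball.2 (key.trans_lt (h s hs t ht))

lemma col_bound {p : ℂ} {R : ℝ} {ρ : ℝ → ℝ} {F : ℂ → ℂ}
    (hFc : ContinuousOn F (ball p R))
    (hFd : ∀ z ∈ ball p R, z.im ≠ ρ z.re → DifferentiableAt ℂ F z)
    (hρc : Continuous ρ)
    {a b u v : ℝ} (hab : a ≤ b) (huv : u ≤ v)
    (hsub : ([[a,b]] ×ℂ [[u,v]]) ⊆ ball p R)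
    {ε L : ℝ} (hL0 : 0 ≤ L)
    (hL : ∀ s ∈ Icc a b, ∀ t ∈ Icc a b, |ρ s - ρ t| ≤ L * (b - a))
    (hband : ∀ z ∈ [[a,b]] ×ℂ [[u,v]], ∀ w ∈ [[a,b]] ×ℂ [[u,v]],
      dist z w ≤ (b-a) + L*(b-a) → ‖F z - F w‖ ≤ ε) :
    ‖Bint F a b u v‖ ≤ 2*ε*((b-a) + L*(b-a)) := by
  obtain ⟨t₁, ht₁, hmin⟩ := isCompact_Icc.exists_isMinOn (Set.nonempty_Icc.2 hab)
    hρc.continuousOn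
  obtain ⟨t₂, ht₂, hmax⟩ := isCompact_Icc.exists_isMaxOn (Set.nonempty_Icc.2 hab)
    hρc.continuousOn
  have hmM : ρ t₁ ≤ ρ t₂ := hmin ht₂
  set p' := min v (max u (ρ t₁)) with hp'
  set q' := min v (max u (ρ t₂)) with hq'
  have hup : u ≤ p' := le_min huv (le_max_left _ _)
  have hpq : p' ≤ q' := min_le_min le_rfl (max_le_max le_rfl hmM)
  have hqv : q' ≤ v := min_le_left _ _
  have hMm : ρ t₂ - ρ t₁ ≤ L * (b - a) :=
    (le_abs_self _).trans (hL t₂ ht₂ t₁ ht₁)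
  have hqp : q' - p' ≤ ρ t₂ - ρ t₁ := by
    have h6 : |q' - p'| ≤ |ρ t₂ - ρ t₁| := by
      calc |q' - p'| ≤ max |v - v| |max u (ρ t₂) - max u (ρ t₁)| :=
            abs_min_sub_min_le_max _ _ _ _
        _ = |max u (ρ t₂) - max u (ρ t₁)| := by simp
        _ = |max (ρ t₂) u - max (ρ t₁) u| := by rw [max_comm u, max_comm u]
        _ ≤ |ρ t₂ - ρ t₁| := abs_max_sub_max_le_abs _ _ _
    calc q' - p' ≤ |q' - p'| := le_abs_self _
      _ ≤ |ρ t₂ - ρ t₁| := h6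
      _ = ρ t₂ - ρ t₁ := abs_of_nonneg (by linarith)
  have hIuv : [[u,v]] = Icc u v := Set.uIcc_of_le huv
  have hIab : [[a,b]] = Icc a b := Set.uIcc_of_le hab
  have hsplit1 : [[u,p']] ⊆ [[u,v]] := by
    rw [hIuv, Set.uIcc_of_le hup]; exact Set.Icc_subset_Icc le_rfl (hpq.trans hqv)
  have hsplit2 : [[p',q']] ⊆ [[u,v]] := by
    rw [hIuv, Set.uIcc_of_le hpq]; exact Set.Icc_subset_Icc hup hqv
  have hsplit3 : [[q',v]] ⊆ [[u,v]] := by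
    rw [hIuv, Set.uIcc_of_le hqv]; exact Set.Icc_subset_Icc (hup.trans hpq) le_rfl
  have hcK : ContinuousOn F ([[a,b]] ×ℂ [[u,v]]) := hFc.mono hsub
  have e1 : Bint F a b u v = Bint F a b u p' + Bint F a b p' v := by
    refine Bint_add_y hcK ?_
    rw [hIuv]; exact ⟨hup, hpq.trans hqv⟩
  have e2 : Bint F a b p' v = Bint F a b p' q' + Bint F a b q' v := by
    refine Bint_add_y (hcK.mono (rect_subset_rect Set.Subset.rfl ?_)) ?_
    · rw [hIuv, Set.uIcc_of_le (hpq.trans hqv)]; exact Set.Icc_subset_Icc hup le_rfl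
    · rw [Set.uIcc_of_le (hpq.trans hqv)]; exact ⟨hpq, hqv⟩
  have hz1 : Bint F a b u p' = 0 := by
    refine Bint_eq_zero_of_diff (hcK.mono (rect_subset_rect Set.Subset.rfl hsplit1)) ?_
    intro z hz
    rw [mem_reProdIm, min_eq_left hab, max_eq_right hab, min_eq_left hup,
      max_eq_right hup] at hz
    have hzb : z ∈ ball p R := by
      apply hsub
      rw [mem_reProdIm, hIuv, hIab]
      exact ⟨Set.Ioo_subset_Icc_self hz.1,
        ⟨hz.2.1.le, hz.2.2.le.trans (hpq.trans hqv)⟩⟩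
    have hple : p' ≤ ρ t₁ := by
      rcases le_or_gt u (ρ t₁) with h | h
      · rw [hp', max_eq_right h]; exact min_le_right _ _
      · exfalso
        have : p' ≤ u := by rw [hp', max_eq_left h.le]; exact min_le_right _ _
        exact absurd (hz.2.1.trans hz.2.2) (not_lt.2 this)
    have him : z.im < ρ z.re :=
      hz.2.2.trans_le (hple.trans (hmin ⟨hz.1.1.le, hz.1.2.le⟩))
    exact (hFd z hzb him.ne).differentiableWithinAt
  have hz3 : Bint F a b q' v = 0 := by
    refine Bint_eq_zero_of_diff (hcK.mono (rect_subset_rect Set.Subset.rfl hsplit3)) ?_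
    intro z hz
    rw [mem_reProdIm, min_eq_left hab, max_eq_right hab, min_eq_left hqv,
      max_eq_right hqv] at hz
    have hzb : z ∈ ball p R := by
      apply hsub
      rw [mem_reProdIm, hIuv, hIab]
      exact ⟨Set.Ioo_subset_Icc_self hz.1,
        ⟨(hup.trans hpq).trans hz.2.1.le, hz.2.2.le⟩⟩
    have hqge : ρ t₂ ≤ q' := by
      rcases le_or_gt v (max u (ρ t₂)) with h | h
      · exfalso
        have : q' = v := by rw [hq', min_eq_left h]
        exact absurd (hz.2.1.trans hz.2.2) (by rw [this]; exact lt_irrefl v)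
      · rw [hq', min_eq_right h.le]; exact le_max_right _ _
    have him : ρ z.re < z.im :=
      ((hmax ⟨hz.1.1.le, hz.1.2.le⟩).trans hqge).trans_lt hz.2.1
    exact (hFd z hzb him.ne').differentiableWithinAt
  have hz2 : ‖Bint F a b p' q'‖ ≤ 2*ε*((b-a) + (q'-p')) := by
    have hcM : ContinuousOn F ([[a,b]] ×ℂ [[p',q']]) :=
      hcK.mono (rect_subset_rect Set.Subset.rfl hsplit2)
    have hbd : ∀ z ∈ [[a,b]] ×ℂ [[p',q']], ‖F z - F (a + p'*I)‖ ≤ ε := by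
      intro z hz
      have hzK : z ∈ [[a,b]] ×ℂ [[u,v]] := rect_subset_rect Set.Subset.rfl hsplit2 hz
      have hwK : (↑a + ↑p'*I : ℂ) ∈ [[a,b]] ×ℂ [[u,v]] :=
        mem_rect left_mem_uIcc (hsplit2 left_mem_uIcc)
      refine hband z hzK _ hwK ?_
      rw [mem_reProdIm] at hz
      have e3 : (z - (↑a + ↑p'*I)).re = z.re - a := by simp
      have e4 : (z - (↑a + ↑p'*I)).im = z.im - p' := by simp
      have hd1 : |z.re - a| ≤ b - a := by
        have h7 := hz.1; rw [hIab, Set.mem_Icc] at h7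
        rw [_root_.abs_of_nonneg (by linarith [h7.1])]; linarith [h7.2]
      have hd2 : |z.im - p'| ≤ q' - p' := by
        have h7 := hz.2; rw [Set.uIcc_of_le hpq, Set.mem_Icc] at h7
        rw [_root_.abs_of_nonneg (by linarith [h7.1])]; linarith [h7.2]
      calc dist z (↑a + ↑p'*I) = ‖z - (↑a + ↑p'*I)‖ := Complex.dist_eq _ _
        _ ≤ |(z - (↑a + ↑p'*I)).re| + |(z - (↑a + ↑p'*I)).im| :=
            Complex.norm_le_abs_re_add_abs_im _
        _ = |z.re - a| + |z.im - p'| := by rw [e3, e4]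
        _ ≤ (b - a) + (q' - p') := add_le_add hd1 hd2
        _ ≤ (b - a) + L*(b-a) := by linarith [hqp.trans hMm]
    have := Bint_norm_le hcM hbd
    calc ‖Bint F a b p' q'‖ ≤ 2*ε*(|b-a| + |q'-p'|) := this
      _ = 2*ε*((b-a) + (q'-p')) := by
          rw [_root_.abs_of_nonneg (by linarith), _root_.abs_of_nonneg (by linarith)]
  have hε : 0 ≤ ε := by
    have h0 : (↑a + ↑u*I : ℂ) ∈ [[a,b]] ×ℂ [[u,v]] := mem_rect left_mem_uIcc left_mem_uIcc
    have := hband _ h0 _ h0 (by rw [dist_self]; nlinarith)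
    exact (norm_nonneg _).trans this
  calc ‖Bint F a b u v‖ = ‖Bint F a b p' q'‖ := by
        rw [e1, e2, hz1, hz3, zero_add, add_zero]
    _ ≤ 2*ε*((b-a) + (q'-p')) := hz2
    _ ≤ 2*ε*((b-a) + L*(b-a)) := by nlinarith [hqp.trans hMm]

lemma Bint_self_x (F : ℂ → ℂ) (a u v : ℝ) : Bint F a a u v = 0 := by
  simp [Bint]

lemma Bint_zero_ordered {p : ℂ} {R : ℝ} {ρ : ℝ → ℝ} (hρ : ContDiff ℝ 1 ρ) {F : ℂ → ℂ}
    (hFc : ContinuousOn F (ball p R))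
    (hFd : ∀ z ∈ ball p R, z.im ≠ ρ z.re → DifferentiableAt ℂ F z)
    {a b u v : ℝ} (hab : a ≤ b) (huv : u ≤ v)
    (hsub : ([[a,b]] ×ℂ [[u,v]]) ⊆ ball p R) :
    Bint F a b u v = 0 := by
  have hρc : Continuous ρ := hρ.continuous
  have hIab : [[a,b]] = Icc a b := Set.uIcc_of_le hab
  have hIuv : [[u,v]] = Icc u v := Set.uIcc_of_le huv
  -- compactness of the rectangle
  have hK : IsCompact ([[a,b]] ×ℂ [[u,v]]) := by
    apply Metric.isCompact_of_isClosed_isBounded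
    · exact (hIab ▸ isClosed_Icc).reProdIm (hIuv ▸ isClosed_Icc)
    · exact (hIab ▸ Metric.isBounded_Icc a b).reProdIm (hIuv ▸ Metric.isBounded_Icc u v)
  have hcK : ContinuousOn F ([[a,b]] ×ℂ [[u,v]]) := hFc.mono hsub
  -- Lipschitz constant for ρ on [a,b]
  obtain ⟨t₀, ht₀, hmax⟩ := isCompact_Icc.exists_isMaxOn (Set.nonempty_Icc.2 hab)
    ((hρ.continuous_deriv le_rfl).abs).continuousOn
  set L := |deriv ρ t₀| with hLdef
  have hL0 : 0 ≤ L := abs_nonneg _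
  have hLip : ∀ s ∈ Icc a b, ∀ t ∈ Icc a b, |ρ s - ρ t| ≤ L * |s - t| := by
    intro s hs t ht
    have := Convex.norm_image_sub_le_of_norm_deriv_le (f := ρ) (s := Icc a b)
      (fun x _ => (hρ.differentiable one_ne_zero).differentiableAt)
      (fun x hx => by simpa [Real.norm_eq_abs] using hmax hx) (convex_Icc a b) ht hs
    simpa [Real.norm_eq_abs] using this
  -- uniform continuity
  have hUC : UniformContinuousOn F ([[a,b]] ×ℂ [[u,v]]) :=
    hK.uniformContinuousOn_of_continuous hcK
  rw [Metric.uniformContinuousOn_iff] at hUC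
  -- enough to bound the norm by every ε > 0
  have key : ∀ ε > (0:ℝ), ‖Bint F a b u v‖ ≤ ε := by
    intro ε hε
    set ε' := ε / (2*(1+L)*(b-a) + 1) with hε'def
    have hde : (0:ℝ) < 2*(1+L)*(b-a) + 1 := by nlinarith
    have hε' : 0 < ε' := div_pos hε hde
    obtain ⟨δ, hδ, hUCδ⟩ := hUC ε' hε'
    obtain ⟨N, hN⟩ := exists_nat_gt (max 1 ((1+L)*(b-a)/δ))
    have hN1 : (1:ℝ) ≤ N := le_of_lt ((le_max_left _ _).trans_lt hN)
    have hN0 : (0:ℝ) < N := by linarith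
    set w := (b-a)/N with hwdef
    have hw0 : 0 ≤ w := div_nonneg (by linarith) hN0.le
    have hwδ : (1+L)*w < δ := by
      have h2 : (1+L)*(b-a)/δ < N := (le_max_right _ _).trans_lt hN
      rw [div_lt_iff₀ hδ] at h2
      rw [hwdef]
      calc (1+L)*((b-a)/N) = (1+L)*(b-a)/N := by ring
        _ < δ := by rw [div_lt_iff₀ hN0]; linarith [h2]
    set x : ℕ → ℝ := fun j => a + j*w with hxdef
    have hxmono : ∀ j : ℕ, x j ≤ x (j+1) := by
      intro j; simp only [hxdef]; push_cast; nlinarith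
    have hxle : ∀ j : ℕ, (j:ℝ) ≤ N → a ≤ x j ∧ x j ≤ b := by
      intro j hj
      constructor
      · simp only [hxdef]; nlinarith [mul_nonneg (Nat.cast_nonneg j : (0:ℝ) ≤ j) hw0]
      · simp only [hxdef, hwdef]
        rw [← sub_nonneg]
        have : b - (a + j*((b-a)/N)) = (b-a)*(1 - j/N) := by field_simp; ring
        rw [this]
        apply mul_nonneg (by linarith)
        rw [sub_nonneg, div_le_one hN0]; exact hj
    have main : ∀ j : ℕ, (j:ℝ) ≤ N →
        ‖Bint F a (x j) u v‖ ≤ j * (2*ε'*(w + L*w)) := by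
      intro j
      induction j with
      | zero => intro _; simp [hxdef, Bint_self_x]
      | succ j ih =>
        intro hj
        have hjN : (j:ℝ) ≤ N := by push_cast at hj ⊢; linarith
        have hxj := hxle j hjN
        have hxj1 := hxle (j+1) hj
        have hcol_sub : ([[x j, x (j+1)]] ×ℂ [[u,v]]) ⊆ [[a,b]] ×ℂ [[u,v]] := by
          apply rect_subset_rect _ Set.Subset.rfl
          rw [hIab, Set.uIcc_of_le (hxmono j)]
          exact Set.Icc_subset_Icc hxj.1 hxj1.2
        have hsplit_sub : ([[a, x (j+1)]] ×ℂ [[u,v]]) ⊆ [[a,b]] ×ℂ [[u,v]] := by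
          apply rect_subset_rect _ Set.Subset.rfl
          rw [hIab, Set.uIcc_of_le (hxj.1.trans (hxmono j))]
          exact Set.Icc_subset_Icc le_rfl hxj1.2
        have hsplit : Bint F a (x (j+1)) u v = Bint F a (x j) u v +
            Bint F (x j) (x (j+1)) u v := by
          apply Bint_add_x (hcK.mono hsplit_sub)
          rw [Set.uIcc_of_le (hxj.1.trans (hxmono j))]
          exact ⟨hxj.1, hxmono j⟩
        have hwid : x (j+1) - x j = w := by simp only [hxdef]; push_cast; ring
        have hcol : ‖Bint F (x j) (x (j+1)) u v‖ ≤ 2*ε'*(w + L*w) := by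
          have := col_bound hFc hFd hρc (hxmono j) huv (hcol_sub.trans hsub) hL0
            (fun s hs t ht => by
              rw [hwid]
              calc |ρ s - ρ t| ≤ L * |s - t| :=
                    hLip s ⟨hxj.1.trans hs.1, hs.2.trans hxj1.2⟩ t
                      ⟨hxj.1.trans ht.1, ht.2.trans hxj1.2⟩
                _ ≤ L * w := by
                    apply mul_le_mul_of_nonneg_left _ hL0
                    rw [abs_le]
                    refine ⟨?_, ?_⟩
                    · linarith [hs.1, ht.2, hwid]
                    · linarith [hs.2, ht.1, hwid]
              )
            (fun z hz w' hw' hdist => by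
              have := hUCδ z (hcol_sub hz) w' (hcol_sub hw')
                (lt_of_le_of_lt (by rw [hwid] at hdist; calc dist z w' ≤ w + L*w := hdist
                  _ = (1+L)*w := by ring) hwδ)
              rw [dist_eq_norm] at this
              exact this.le)
          calc ‖Bint F (x j) (x (j+1)) u v‖ ≤
              2*ε'*((x (j+1) - x j) + L*(x (j+1) - x j)) := this
            _ = 2*ε'*(w + L*w) := by rw [hwid]
        calc ‖Bint F a (x (j+1)) u v‖ ≤ ‖Bint F a (x j) u v‖ +
              ‖Bint F (x j) (x (j+1)) u v‖ := by rw [hsplit]; exact norm_add_le _ _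
          _ ≤ j * (2*ε'*(w + L*w)) + 2*ε'*(w + L*w) := add_le_add (ih hjN) hcol
          _ = ((j+1 : ℕ) : ℝ) * (2*ε'*(w + L*w)) := by push_cast; ring
    have hxN : x N = b := by
      simp only [hxdef, hwdef]
      field_simp
      ring
    have := main N le_rfl
    rw [hxN] at this
    calc ‖Bint F a b u v‖ ≤ N * (2*ε'*(w + L*w)) := this
      _ = 2*ε'*(1+L)*(N*w) := by ring
      _ = 2*ε'*(1+L)*(b-a) := by
          rw [hwdef]; field_simp
      _ ≤ ε := by
          rw [hε'def]
          have hkey : 2 * (ε / (2*(1+L)*(b-a) + 1)) * (1+L) * (b-a) =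
              ε * (2*(1+L)*(b-a)) / (2*(1+L)*(b-a) + 1) := by ring
          rw [hkey, div_le_iff₀ hde]
          nlinarith
  have h0 : ‖Bint F a b u v‖ ≤ 0 := le_of_forall_pos_le_add (by
    intro ε hε; simpa using key ε hε)
  simpa using norm_le_zero_iff.1 h0

lemma Bint_zero {p : ℂ} {R : ℝ} {ρ : ℝ → ℝ} (hρ : ContDiff ℝ 1 ρ) {F : ℂ → ℂ}
    (hFc : ContinuousOn F (ball p R))
    (hFd : ∀ z ∈ ball p R, z.im ≠ ρ z.re → DifferentiableAt ℂ F z)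
    {a b u v : ℝ} (hsub : ([[a,b]] ×ℂ [[u,v]]) ⊆ ball p R) :
    Bint F a b u v = 0 := by
  rcases le_total a b with hab | hab <;> rcases le_total u v with huv | huv
  · exact Bint_zero_ordered hρ hFc hFd hab huv hsub
  · have h := Bint_zero_ordered hρ hFc hFd hab huv
      (by rwa [Set.uIcc_comm v u])
    rw [show Bint F a b u v = - Bint F a b v u from Bint_symm_y F a b v u, h, neg_zero]
  · have h := Bint_zero_ordered hρ hFc hFd hab huv
      (by rwa [Set.uIcc_comm b a])
    rw [show Bint F a b u v = - Bint F b a u v from Bint_symm_x F b a u v, h, neg_zero]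
  · have h := Bint_zero_ordered hρ hFc hFd hab huv
      (by rwa [Set.uIcc_comm b a, Set.uIcc_comm v u])
    rw [show Bint F a b u v = - Bint F b a u v from Bint_symm_x F b a u v,
      show Bint F b a u v = - Bint F b a v u from Bint_symm_y F b a v u, h, neg_zero, neg_zero]

lemma seg_h_integrable {p : ℂ} {R : ℝ} {F : ℂ → ℂ} (hFc : ContinuousOn F (ball p R))
    {a b y : ℝ} (ha : (↑a + ↑y*I : ℂ) ∈ ball p R) (hb : (↑b + ↑y*I : ℂ) ∈ ball p R) :
    IntervalIntegrable (fun t : ℝ => F (t + y*I)) MeasureTheory.volume a b := by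
  have hss : ([[a,b]] ×ℂ [[y,y]]) ⊆ ball p R := by
    apply rect_subset_ball
    intro s hs t ht
    simp only [Set.mem_insert_iff, Set.mem_singleton_iff] at hs ht
    have hty : t = y := by rcases ht with h | h <;> exact h
    subst hty
    rcases hs with h | h <;> subst h
    · exact mem_ball.1 ha
    · exact mem_ball.1 hb
  exact intInt_h (hFc.mono hss) left_mem_uIcc

lemma seg_v_integrable {p : ℂ} {R : ℝ} {F : ℂ → ℂ} (hFc : ContinuousOn F (ball p R))
    {x u v : ℝ} (hu : (↑x + ↑u*I : ℂ) ∈ ball p R) (hv : (↑x + ↑v*I : ℂ) ∈ ball p R) :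
    IntervalIntegrable (fun t : ℝ => F (x + t*I)) MeasureTheory.volume u v := by
  have hss : ([[x,x]] ×ℂ [[u,v]]) ⊆ ball p R := by
    apply rect_subset_ball
    intro s hs t ht
    simp only [Set.mem_insert_iff, Set.mem_singleton_iff] at hs ht
    have hsx : s = x := by rcases hs with h | h <;> exact h
    subst hsx
    rcases ht with h | h <;> subst h
    · exact mem_ball.1 hu
    · exact mem_ball.1 hv
  exact intInt_v (hFc.mono hss) left_mem_uIcc

lemma dist_mk_le (s t : ℝ) (z : ℂ) : dist (↑s + ↑t*I : ℂ) z ≤ |s - z.re| + |t - z.im| := by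
  rw [Complex.dist_eq]
  calc ‖(↑s + ↑t*I : ℂ) - z‖
      ≤ |((↑s + ↑t*I : ℂ) - z).re| + |((↑s + ↑t*I : ℂ) - z).im| :=
        Complex.norm_le_abs_re_add_abs_im _
    _ = |s - z.re| + |t - z.im| := by simp

theorem holomorphic_across_smooth_arc'
    (c : ℂ) (R : ℝ) (hR : 0 < R) (ρ : ℝ → ℝ) (hρ : ContDiff ℝ 1 ρ)
    (F : ℂ → ℂ) (hFc : ContinuousOn F (ball c R))
    (hFd : ∀ z ∈ ball c R, z.im ≠ ρ z.re → DifferentiableAt ℂ F z) :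
    DifferentiableOn ℂ F (ball c R) := by
  set G : ℂ → ℂ := fun z =>
    (∫ t in c.re..z.re, F (t + c.im*I)) + I*(∫ t in c.im..z.im, F (z.re + t*I)) with hGdef
  have hG : ∀ w ∈ ball c R, HasDerivAt G (F w) w := by
    intro w hw
    have hwc : dist w c < R := mem_ball.1 hw
    rw [hasDerivAt_iff_isLittleO, Asymptotics.isLittleO_iff]
    intro C hC
    have hcw : ContinuousAt F w := hFc.continuousAt (isOpen_ball.mem_nhds hw)
    rw [Metric.continuousAt_iff] at hcw
    obtain ⟨δ₁, hδ₁, hF1⟩ := hcw (C/2) (by linarith)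
    set r := R - dist w c with hrdef
    have hr : 0 < r := by simp only [hrdef]; linarith
    set δ := min (r/4) (δ₁/4) with hδdef
    have hδ : 0 < δ := lt_min (by linarith) (by linarith)
    rw [Metric.eventually_nhds_iff]
    refine ⟨δ, hδ, ?_⟩
    intro u hu
    have huw : dist u w < δ := by simpa [dist_comm] using hu
    -- memberships of corners
    have hre_uw : |u.re - w.re| ≤ dist u w := by
      rw [Complex.dist_eq, ← Complex.sub_re]; exact Complex.abs_re_le_norm _
    have him_uw : |u.im - w.im| ≤ dist u w := by
      rw [Complex.dist_eq, ← Complex.sub_im]; exact Complex.abs_im_le_norm _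
    have hmw : (↑w.re + ↑w.im*I : ℂ) ∈ ball c R := by rw [Complex.re_add_im]; exact hw
    have hmu : (↑u.re + ↑u.im*I : ℂ) ∈ ball c R := by
      rw [Complex.re_add_im, mem_ball]
      calc dist u c ≤ dist u w + dist w c := dist_triangle _ _ _
        _ < δ + dist w c := by linarith
        _ ≤ r/4 + (R - r) := by
            have : δ ≤ r/4 := min_le_left _ _
            simp only [hrdef] at *; linarith
        _ < R := by linarith
    have hmwc : (↑w.re + ↑c.im*I : ℂ) ∈ ball c R := by
      rw [mem_ball]
      calc dist (↑w.re + ↑c.im*I : ℂ) c ≤ |w.re - c.re| + |c.im - c.im| := dist_mk_le _ _ _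
        _ = |(w - c).re| := by simp [Complex.sub_re]
        _ ≤ ‖w - c‖ := Complex.abs_re_le_norm _
        _ < R := by rw [← Complex.dist_eq]; exact hwc
    have hmuc : (↑u.re + ↑c.im*I : ℂ) ∈ ball c R := by
      rw [mem_ball]
      have hu_ball : dist u c < R := mem_ball.1 (by rw [← Complex.re_add_im u]; exact hmu)
      calc dist (↑u.re + ↑c.im*I : ℂ) c ≤ |u.re - c.re| + |c.im - c.im| := dist_mk_le _ _ _
        _ = |(u - c).re| := by simp [Complex.sub_re]
        _ ≤ ‖u - c‖ := Complex.abs_re_le_norm _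
        _ < R := by rw [← Complex.dist_eq]; exact hu_ball
    have hmuwim : (↑u.re + ↑w.im*I : ℂ) ∈ ball c R := by
      rw [mem_ball]
      calc dist (↑u.re + ↑w.im*I : ℂ) c
          ≤ dist (↑u.re + ↑w.im*I : ℂ) w + dist w c := dist_triangle _ _ _
        _ ≤ (|u.re - w.re| + |w.im - w.im|) + dist w c :=
            add_le_add (dist_mk_le _ _ _) le_rfl
        _ ≤ dist u w + dist w c := by
            rw [sub_self, abs_zero, add_zero]; exact add_le_add hre_uw le_rfl
        _ < δ + dist w c := by linarith
        _ ≤ r/4 + (R - r) := by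
            have : δ ≤ r/4 := min_le_left _ _
            simp only [hrdef] at *; linarith
        _ < R := by linarith
    have hcc : (↑c.re + ↑c.im*I : ℂ) ∈ ball c R := by
      rw [Complex.re_add_im]; exact mem_ball_self hR
    -- key rectangle
    have hrect : ([[w.re, u.re]] ×ℂ [[c.im, w.im]]) ⊆ ball c R := by
      apply rect_subset_ball
      intro s hs t ht
      simp only [Set.mem_insert_iff, Set.mem_singleton_iff] at hs ht
      rcases hs with h | h <;> subst h <;> rcases ht with h | h <;> subst h
      · exact mem_ball.1 hmwc
      · exact mem_ball.1 hmw
      · exact mem_ball.1 hmuc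
      · exact mem_ball.1 hmuwim
    have hB := Bint_zero hρ hFc hFd hrect
    simp only [Bint, smul_eq_mul] at hB
    -- integrability
    have i1 := seg_h_integrable hFc hcc hmwc
    have i2 := seg_h_integrable hFc hmwc hmuc
    have i3 := seg_v_integrable hFc hmuc hmuwim
    have i4 := seg_v_integrable hFc hmuwim hmu
    have i6 := seg_h_integrable hFc hmw hmuwim
    -- splitting
    have E1 : (∫ t in c.re..u.re, F (t + c.im*I)) =
        (∫ t in c.re..w.re, F (t + c.im*I)) + ∫ t in w.re..u.re, F (t + c.im*I) :=
      (intervalIntegral.integral_add_adjacent_intervals i1 i2).symm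
    have E2 : (∫ t in c.im..u.im, F (u.re + t*I)) =
        (∫ t in c.im..w.im, F (u.re + t*I)) + ∫ t in w.im..u.im, F (u.re + t*I) :=
      (intervalIntegral.integral_add_adjacent_intervals i3 i4).symm
    have hkey : G u - G w = (∫ t in w.re..u.re, F (t + w.im*I)) +
        I*(∫ t in w.im..u.im, F (u.re + t*I)) := by
      simp only [hGdef]
      rw [E1, E2]
      linear_combination hB
    have hdec : (u - w : ℂ) = ((u.re - w.re : ℝ) : ℂ) + ((u.im - w.im : ℝ) : ℂ)*I := by
      simp [Complex.ext_iff]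
    have hfinal : G u - G w - (u - w) • F w =
        (∫ t in w.re..u.re, (F (t + w.im*I) - F w)) +
          I*(∫ t in w.im..u.im, (F (u.re + t*I) - F w)) := by
      rw [intervalIntegral.integral_sub i6 intervalIntegrable_const,
        intervalIntegral.integral_sub i4 intervalIntegrable_const,
        intervalIntegral.integral_const, intervalIntegral.integral_const,
        hkey, smul_eq_mul, hdec]
      simp only [Complex.real_smul]
      push_cast
      ring
    -- bounds
    have b1 : ‖∫ t in w.re..u.re, (F (t + w.im*I) - F w)‖ ≤ (C/2) * |u.re - w.re| := by
      apply intervalIntegral.norm_integral_le_of_norm_le_const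
      intro t ht
      have htc : |t - w.re| ≤ |u.re - w.re| := by
        have := abs_sub_le_of_uIcc (m := w.re) (uIoc_subset_uIcc ht)
        simpa [max_eq_right (abs_nonneg (u.re - w.re))] using this
      have hdist : dist (↑t + ↑w.im*I : ℂ) w < δ₁ := by
        calc dist (↑t + ↑w.im*I : ℂ) w ≤ |t - w.re| + |w.im - w.im| := dist_mk_le _ _ _
          _ = |t - w.re| := by rw [sub_self, abs_zero, add_zero]
          _ ≤ |u.re - w.re| := htc
          _ ≤ dist u w := hre_uw
          _ < δ := huw
          _ ≤ δ₁/4 := min_le_right _ _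
          _ < δ₁ := by linarith
      have := hF1 hdist
      rw [dist_eq_norm] at this
      exact this.le
    have b2 : ‖∫ t in w.im..u.im, (F (u.re + t*I) - F w)‖ ≤ (C/2) * |u.im - w.im| := by
      apply intervalIntegral.norm_integral_le_of_norm_le_const
      intro t ht
      have htc : |t - w.im| ≤ |u.im - w.im| := by
        have := abs_sub_le_of_uIcc (m := w.im) (uIoc_subset_uIcc ht)
        simpa [max_eq_right (abs_nonneg (u.im - w.im))] using this
      have hdist : dist (↑u.re + ↑t*I : ℂ) w < δ₁ := by
        calc dist (↑u.re + ↑t*I : ℂ) w ≤ |u.re - w.re| + |t - w.im| := dist_mk_le _ _ _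
          _ ≤ dist u w + dist u w := add_le_add hre_uw (htc.trans him_uw)
          _ < δ + δ := by linarith
          _ ≤ δ₁/4 + δ₁/4 := add_le_add (min_le_right _ _) (min_le_right _ _)
          _ < δ₁ := by linarith
      have := hF1 hdist
      rw [dist_eq_norm] at this
      exact this.le
    have hCnn : 0 ≤ C/2 := by linarith
    calc ‖G u - G w - (u - w) • F w‖
        = ‖(∫ t in w.re..u.re, (F (t + w.im*I) - F w)) +
            I*(∫ t in w.im..u.im, (F (u.re + t*I) - F w))‖ := by rw [hfinal]
      _ ≤ ‖∫ t in w.re..u.re, (F (t + w.im*I) - F w)‖ +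
            ‖I*(∫ t in w.im..u.im, (F (u.re + t*I) - F w))‖ := norm_add_le _ _
      _ = ‖∫ t in w.re..u.re, (F (t + w.im*I) - F w)‖ +
            ‖∫ t in w.im..u.im, (F (u.re + t*I) - F w)‖ := by
          rw [norm_mul, Complex.norm_I, one_mul]
      _ ≤ (C/2) * |u.re - w.re| + (C/2) * |u.im - w.im| := add_le_add b1 b2
      _ ≤ (C/2) * ‖u - w‖ + (C/2) * ‖u - w‖ := by
          have h1 : |u.re - w.re| ≤ ‖u - w‖ := by rw [← dist_eq_norm]; exact hre_uw
          have h2 : |u.im - w.im| ≤ ‖u - w‖ := by rw [← dist_eq_norm]; exact him_uw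
          exact add_le_add (mul_le_mul_of_nonneg_left h1 hCnn)
            (mul_le_mul_of_nonneg_left h2 hCnn)
      _ = C * ‖u - w‖ := by ring
  -- conclude
  have hGd : DifferentiableOn ℂ G (ball c R) := fun w hw =>
    ((hG w hw).differentiableAt).differentiableWithinAt
  have hGa := (hGd.analyticOnNhd isOpen_ball).deriv
  refine (hGa.differentiableOn).congr ?_
  intro w hw
  exact ((hG w hw).deriv).symm

/-- A function continuous on an open disc and holomorphic off a smooth arc
(the graph of a C¹ function) is holomorphic on the whole disc. -/
theorem holomorphic_across_smooth_arc
    (c : ℂ) (R : ℝ) (hR : 0 < R) (ρ : ℝ → ℝ) (hρ : ContDiff ℝ 1 ρ)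
    (F : ℂ → ℂ) (hFc : ContinuousOn F (ball c R))
    (hFd : ∀ z ∈ ball c R, z.im ≠ ρ z.re → DifferentiableAt ℂ F z) :
    DifferentiableOn ℂ F (ball c R) := by
  exact holomorphic_across_smooth_arc' c R hR ρ hρ F hFc hFd
end

section
/- Let F: D → ℂ be holomorphic on an open set D ⊂ ℂ, write F = x + iy with x, y real, and let z = η + iζ. Let a(η,ζ) = −(1/2)ln((η²+ζ²)ⁿ(1 + x² + y²)) and θ(η,ζ) = n·arg(z). Then on D \ {0}: ∂a/∂ζ = ∂θ/∂η + (x ∂y/∂η − y ∂x/∂η)/(1 + x² + y²) and ∂a/∂η = −[∂θ/∂ζ + (x ∂y/∂ζ − y ∂x/∂ζ)/(1 + x² + y²)]. -/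
open Complex

lemma fderiv_arg_apply (z : ℂ) (hz0 : z ≠ 0)
    (harg : DifferentiableAt ℝ Complex.arg z) (v : ℂ) :
    fderiv ℝ Complex.arg z v =
      (v.im * z.re - v.re * z.im) / (z.re ^ 2 + z.im ^ 2) := by
  have habs : DifferentiableAt ℝ (fun w : ℂ => ‖w‖) z := by
    simpa using (differentiableAt_id.norm ℝ hz0)
  set u := fderiv ℝ (fun w : ℂ => ‖w‖) z with hu
  set t := fderiv ℝ Complex.arg z with ht
  have h1 : HasFDerivAt (fun w : ℂ => ((‖w‖ : ℝ) : ℂ))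
      (Complex.ofRealCLM.comp u) z :=
    Complex.ofRealCLM.hasFDerivAt.comp z habs.hasFDerivAt
  have h2 : HasFDerivAt (fun w : ℂ => (Complex.arg w : ℂ))
      (Complex.ofRealCLM.comp t) z :=
    Complex.ofRealCLM.hasFDerivAt.comp z harg.hasFDerivAt
  have h3 := ((h2.mul_const I).cexp)
  have h4 := h1.mul h3
  have h5 : HasFDerivAt (fun w : ℂ => w) _ z :=
    h4.congr_of_eventuallyEq
      (Filter.Eventually.of_forall fun w => (Complex.norm_mul_exp_arg_mul_I w).symm)
  have h6 := h5.unique (hasFDerivAt_id z)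
  have eqc := congrArg (fun (L : ℂ →L[ℝ] ℂ) => L v) h6
  simp only [ContinuousLinearMap.add_apply, ContinuousLinearMap.smul_apply,
    ContinuousLinearMap.comp_apply, ContinuousLinearMap.smulRight_apply,
    ContinuousLinearMap.coe_id', id_eq, Complex.ofRealCLM_apply,
    smul_eq_mul, Complex.real_smul] at eqc
  rw [Complex.ext_iff] at eqc
  simp only [Complex.mul_re, Complex.mul_im, Complex.I_re, Complex.I_im,
    Complex.ofReal_re, Complex.ofReal_im, Complex.add_re, Complex.add_im] at eqc
  obtain ⟨e1, e2⟩ := eqc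
  have hz := Complex.norm_mul_exp_arg_mul_I z
  rw [Complex.ext_iff] at hz
  simp only [Complex.mul_re, Complex.mul_im, Complex.ofReal_re, Complex.ofReal_im] at hz
  obtain ⟨hzre, hzim⟩ := hz
  have hB : z.re ^ 2 + z.im ^ 2 ≠ 0 := by
    have := Complex.normSq_pos.mpr hz0
    rw [Complex.normSq_apply] at this
    nlinarith
  rw [eq_div_iff hB, ← hzre, ← hzim]
  linear_combination (‖z‖ * (cexp (↑z.arg * Complex.I)).re) * e2 -
    (‖z‖ * (cexp (↑z.arg * Complex.I)).im) * e1
/-- Contact Cauchy–Riemann equations for the curve `(zⁿ, zⁿF(z))` in Hopf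
coordinates: with `F` holomorphic, `x = Re F`, `y = Im F`,
`a = −(1/2)ln((η²+ζ²)ⁿ(1+x²+y²))` and `θ = n·arg z`, one has
`a_ζ = θ_η + (x y_η − y x_η)/(1+x²+y²)` and
`a_η = −(θ_ζ + (x y_ζ − y x_ζ)/(1+x²+y²))` on `D \ {0}`
(at points where `arg` is differentiable). -/
theorem contact_CR_equations_hopf
    (D : Set ℂ) (hD : IsOpen D) (F : ℂ → ℂ) (hF : DifferentiableOn ℂ F D)
    (n : ℕ) (hn : 0 < n)
    (A Θ X Y : ℂ → ℝ)
    (hA : ∀ z, A z = -(1 / 2) * Real.log ((z.re ^ 2 + z.im ^ 2) ^ n *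
      (1 + (F z).re ^ 2 + (F z).im ^ 2)))
    (hΘ : ∀ z, Θ z = n * Complex.arg z)
    (hX : ∀ z, X z = (F z).re) (hY : ∀ z, Y z = (F z).im)
    (z : ℂ) (hz : z ∈ D) (hz0 : z ≠ 0)
    (harg : DifferentiableAt ℝ Complex.arg z) :
    fderiv ℝ A z Complex.I =
      fderiv ℝ Θ z 1 +
        (X z * fderiv ℝ Y z 1 - Y z * fderiv ℝ X z 1) /
          (1 + X z ^ 2 + Y z ^ 2) ∧
    fderiv ℝ A z 1 =
      -(fderiv ℝ Θ z Complex.I +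
        (X z * fderiv ℝ Y z Complex.I - Y z * fderiv ℝ X z Complex.I) /
          (1 + X z ^ 2 + Y z ^ 2)) := by
  have hXe : X = fun w => (F w).re := funext hX
  have hYe : Y = fun w => (F w).im := funext hY
  have hΘe : Θ = fun w => (n : ℝ) * Complex.arg w := funext hΘ
  have hAe : A = fun w => -(1 / 2) * Real.log ((w.re ^ 2 + w.im ^ 2) ^ n *
      (1 + (F w).re ^ 2 + (F w).im ^ 2)) := funext hA
  have hFd : DifferentiableAt ℂ F z := hF.differentiableAt (hD.mem_nhds hz)
  set c := deriv F z with hcdef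
  have hcr : HasFDerivAt F
      (((1 : ℂ →L[ℂ] ℂ).smulRight c).restrictScalars ℝ) z :=
    hFd.hasDerivAt.hasFDerivAt.restrictScalars ℝ
  have hXf : HasFDerivAt X
      (Complex.reCLM.comp (((1 : ℂ →L[ℂ] ℂ).smulRight c).restrictScalars ℝ)) z := by
    rw [hXe]; exact Complex.reCLM.hasFDerivAt.comp z hcr
  have hYf : HasFDerivAt Y
      (Complex.imCLM.comp (((1 : ℂ →L[ℂ] ℂ).smulRight c).restrictScalars ℝ)) z := by
    rw [hYe]; exact Complex.imCLM.hasFDerivAt.comp z hcr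
  have hX1 : fderiv ℝ X z 1 = c.re := by rw [hXf.fderiv]; simp
  have hXI : fderiv ℝ X z Complex.I = -c.im := by
    rw [hXf.fderiv]; simp [Complex.mul_re]
  have hY1 : fderiv ℝ Y z 1 = c.im := by rw [hYf.fderiv]; simp
  have hYI : fderiv ℝ Y z Complex.I = c.re := by
    rw [hYf.fderiv]; simp [Complex.mul_im]
  -- Θ
  have hΘf : HasFDerivAt Θ ((n : ℝ) • fderiv ℝ Complex.arg z) z := by
    rw [hΘe]; exact harg.hasFDerivAt.const_mul (n : ℝ)
  have hB0 : (0:ℝ) < z.re ^ 2 + z.im ^ 2 := by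
    have := Complex.normSq_pos.mpr hz0
    rw [Complex.normSq_apply] at this; nlinarith
  have hΘ1 : fderiv ℝ Θ z 1 = (n : ℝ) * (-z.im / (z.re ^ 2 + z.im ^ 2)) := by
    rw [hΘf.fderiv]
    simp [fderiv_arg_apply z hz0 harg]
  have hΘI : fderiv ℝ Θ z Complex.I = (n : ℝ) * (z.re / (z.re ^ 2 + z.im ^ 2)) := by
    rw [hΘf.fderiv]
    simp [fderiv_arg_apply z hz0 harg]
  -- A
  have hre : HasFDerivAt (fun w : ℂ => w.re) Complex.reCLM z := Complex.reCLM.hasFDerivAt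
  have him : HasFDerivAt (fun w : ℂ => w.im) Complex.imCLM z := Complex.imCLM.hasFDerivAt
  have hQ0 : (0:ℝ) < 1 + (F z).re ^ 2 + (F z).im ^ 2 := by positivity
  set A₂ : ℂ → ℝ := fun w => -(1 / 2) * ((n : ℝ) * Real.log (w.re ^ 2 + w.im ^ 2) +
      Real.log (1 + (F w).re ^ 2 + (F w).im ^ 2)) with hA₂def
  have heq : A =ᶠ[nhds z] A₂ := by
    filter_upwards [isOpen_compl_singleton.mem_nhds
      (by simpa using hz0 : z ∈ ({(0:ℂ)}ᶜ : Set ℂ))] with w hw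
    have hw0 : w ≠ 0 := hw
    have hBw : w.re ^ 2 + w.im ^ 2 ≠ 0 := by
      have := Complex.normSq_pos.mpr hw0
      rw [Complex.normSq_apply] at this; nlinarith
    have hQw : (1 + (F w).re ^ 2 + (F w).im ^ 2) ≠ 0 := by positivity
    rw [hA w, hA₂def, Real.log_mul (pow_ne_zero _ hBw) hQw, Real.log_pow]
  have hre2 := (hasDerivAt_pow 2 z.re).comp_hasFDerivAt z hre
  have him2 := (hasDerivAt_pow 2 z.im).comp_hasFDerivAt z him
  have hb := hre2.add him2
  have hX2 := (hasDerivAt_pow 2 ((F z).re)).comp_hasFDerivAt z (hXe ▸ hXf)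
  have hY2 := (hasDerivAt_pow 2 ((F z).im)).comp_hasFDerivAt z (hYe ▸ hYf)
  have hq := (hX2.const_add 1).add hY2
  have hlogb := hb.log hB0.ne'
  have hlogq : HasFDerivAt (fun w : ℂ => Real.log (1 + (F w).re ^ 2 + (F w).im ^ 2)) _ z :=
    hq.log hQ0.ne'
  have hA2 : HasFDerivAt A₂ _ z := ((hlogb.const_mul (n : ℝ)).add hlogq).const_mul (-(1/2 : ℝ))
  have hfA : fderiv ℝ A z = fderiv ℝ A₂ z := heq.fderiv_eq
  have hAI := congrArg (fun L : ℂ →L[ℝ] ℝ => L Complex.I) (hfA.trans hA2.fderiv)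
  have hA1 := congrArg (fun L : ℂ →L[ℝ] ℝ => L 1) (hfA.trans hA2.fderiv)
  simp only [ContinuousLinearMap.smul_apply, ContinuousLinearMap.add_apply,
    ContinuousLinearMap.comp_apply, ContinuousLinearMap.smulRight_apply,
    ContinuousLinearMap.coe_restrictScalars', ContinuousLinearMap.one_apply,
    ContinuousLinearMap.coe_smul', Pi.smul_apply, smul_eq_mul,
    Complex.reCLM_apply, Complex.imCLM_apply, Complex.I_re, Complex.I_im,
    Complex.mul_re, Complex.mul_im, Complex.one_re, Complex.one_im, pow_one] at hAI hA1
  constructor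
  · rw [hAI, hΘ1, hX z, hY z, hX1, hY1]
    simp only [Function.comp_apply, Pi.add_apply, pow_one]
    push_cast
    field_simp
    try ring
  · rw [hA1, hΘI, hX z, hY z, hXI, hYI]
    simp only [Function.comp_apply, Pi.add_apply, pow_one]
    push_cast
    field_simp
    try ring
end
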